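/- Let G be a group, let 1 ≤ p < ∞, and let d : ℂ[G] → ℓ^p(G) be a derivation (with respect to the convolution bimodule structure) which is bounded from the supremum norm on ℂ[G] to the ℓ^p norm, i.e. there exists M such that ‖d x‖_p ≤ M·‖x‖_s for all x ∈ ℂ[G]. Then d is quasi-inner: (d δ_t)(g·t) = 0 for all g, t ∈ G with g·t = t·g. -/

import Mathlib

/-- Left action of the group ring `ℂ[G]` on functions `G → ℂ` by convolution. -/
noncomputable def convL (G : Type*) [Group G] (x : MonoidAlgebra ℂ G) (f : G → ℂ) : G → ℂ :=
  fun u => ∑ g ∈ x.coeff.support, x.coeff g * f (g⁻¹ * u)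

/-- Right action of the group ring `ℂ[G]` on functions `G → ℂ` by convolution. -/
noncomputable def convR (G : Type*) [Group G] (f : G → ℂ) (x : MonoidAlgebra ℂ G) : G → ℂ :=
  fun u => ∑ g ∈ x.coeff.support, f (u * g⁻¹) * x.coeff g

/-- The supremum norm on the group ring `ℂ[G]`. -/
noncomputable def supNorm {G : Type*} [Group G] (x : MonoidAlgebra ℂ G) : ℝ :=
  ⨆ g, ‖x.coeff g‖

/-- The `ℓ^p` norm of a function `f : G → ℂ`. -/
noncomputable def lpNorm {G : Type*} (p : ℝ) (f : G → ℂ) : ℝ :=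
  (∑' g : G, ‖f g‖ ^ p) ^ (1 / p)

lemma convL_single {G : Type*} [Group G] (a : G) (f : G → ℂ) (u : G) :
    convL G (MonoidAlgebra.single a (1:ℂ)) f u = f (a⁻¹ * u) := by
  simp [convL, MonoidAlgebra.coeff_single, Finsupp.support_single_ne_zero a (one_ne_zero (α := ℂ))]

lemma convR_single {G : Type*} [Group G] (a : G) (f : G → ℂ) (u : G) :
    convR G f (MonoidAlgebra.single a (1:ℂ)) u = f (u * a⁻¹) := by
  simp [convR, MonoidAlgebra.coeff_single, Finsupp.support_single_ne_zero a (one_ne_zero (α := ℂ))]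

lemma supNorm_single {G : Type*} [Group G] (a : G) :
    supNorm (MonoidAlgebra.single a (1:ℂ)) = 1 := by
  haveI : Nonempty G := ⟨1⟩
  have hval : ∀ g : G, ‖(MonoidAlgebra.single a (1:ℂ)).coeff g‖ ≤ 1 := by
    intro g
    rcases eq_or_ne a g with rfl | h
    · simp [MonoidAlgebra.coeff_single_apply]
    · simp [MonoidAlgebra.coeff_single_apply, h]
  unfold supNorm
  apply le_antisymm
  · exact ciSup_le hval
  · have h1 : ‖(MonoidAlgebra.single a (1:ℂ)).coeff a‖ = 1 := by
      simp [MonoidAlgebra.coeff_single_apply]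
    calc (1:ℝ) = ‖(MonoidAlgebra.single a (1:ℂ)).coeff a‖ := h1.symm
      _ ≤ ⨆ g, ‖(MonoidAlgebra.single a (1:ℂ)).coeff g‖ := by
          have hb : BddAbove (Set.range fun g : G => ‖(MonoidAlgebra.single a (1:ℂ)).coeff g‖) := by
            refine ⟨1, ?_⟩
            rintro x ⟨g, rfl⟩
            exact hval g
          exact le_ciSup hb a

/-- For `1 ≤ p < ∞`, every derivation `d : ℂ[G] → ℓ^p(G)` which is bounded from the
supremum norm to the `ℓ^p` norm is quasi-inner: `(d δ_t)(g*t) = 0` whenever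
`g*t = t*g`. -/
theorem derivation_into_lp_quasiInner
    (G : Type*) [Group G] (p : ℝ) (hp : 1 ≤ p)
    (d : MonoidAlgebra ℂ G →ₗ[ℂ] (G → ℂ))
    -- d takes values in ℓ^p(G)
    (hmem : ∀ x : MonoidAlgebra ℂ G, Summable (fun g : G => ‖d x g‖ ^ p))
    -- d is a derivation
    (hder : ∀ x y : MonoidAlgebra ℂ G, d (x * y) = convR G (d x) y + convL G x (d y))
    -- d is bounded from the supremum norm to the ℓ^p norm
    (M : ℝ) (hbdd : ∀ x : MonoidAlgebra ℂ G, lpNorm p (d x) ≤ M * supNorm x) :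
    ∀ g t : G, g * t = t * g → d (MonoidAlgebra.single t (1 : ℂ)) (g * t) = 0 := by
  intro g t hgt
  have hp0 : (0:ℝ) < p := lt_of_lt_of_le one_pos hp
  set c := d (MonoidAlgebra.single t (1:ℂ)) (g * t) with hcdef
  -- d 1 = 0
  have hone : d 1 = 0 := by
    have h := hder 1 1
    rw [one_mul] at h
    have hL : convL G 1 (d 1) = d 1 := by
      funext u
      rw [MonoidAlgebra.one_def, convL_single]
      simp
    have hR : convR G (d 1) 1 = d 1 := by
      funext u
      rw [MonoidAlgebra.one_def, convR_single]
      simp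
    rw [hL, hR] at h
    have := add_eq_right.mp h.symm
    exact this
  -- commutation
  have hcomm : ∀ n : ℕ, g * t ^ n = t ^ n * g := fun n => Commute.pow_right hgt n
  -- recurrence: d(δ_{t^n})(g t^n) = n c
  have key : ∀ n : ℕ, d (MonoidAlgebra.single (t ^ n) (1:ℂ)) (g * t ^ n) = (n : ℂ) * c := by
    intro n
    induction n with
    | zero =>
      simp only [pow_zero]
      rw [← MonoidAlgebra.one_def, hone]
      simp
    | succ n ih =>
      have hmul : (MonoidAlgebra.single (t ^ (n+1)) (1:ℂ)) =
          MonoidAlgebra.single (t ^ n) (1:ℂ) * MonoidAlgebra.single t (1:ℂ) := by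
        rw [MonoidAlgebra.single_mul_single, one_mul, pow_succ]
      have h := congrFun (hder (MonoidAlgebra.single (t ^ n) (1:ℂ))
        (MonoidAlgebra.single t (1:ℂ))) (g * t ^ (n+1))
      rw [← hmul] at h
      rw [h]
      simp only [Pi.add_apply]
      rw [convR_single, convL_single]
      have e1 : g * t ^ (n+1) * t⁻¹ = g * t ^ n := by group
      have e2 : (t ^ n)⁻¹ * (g * t ^ (n+1)) = g * t := by
        calc (t ^ n)⁻¹ * (g * t ^ (n+1)) = (t ^ n)⁻¹ * (g * t ^ n) * t := by group
          _ = (t ^ n)⁻¹ * (t ^ n * g) * t := by rw [hcomm n]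
          _ = g * t := by group
      rw [e1, e2, ih, ← hcdef]
      push_cast
      ring
  -- pointwise bound by lp norm
  have hpt : ∀ x : MonoidAlgebra ℂ G, ∀ u : G, ‖d x u‖ ≤ lpNorm p (d x) := by
    intro x u
    have h1 : ‖d x u‖ ^ p ≤ ∑' g : G, ‖d x g‖ ^ p :=
      (hmem x).le_tsum u (fun _ _ => Real.rpow_nonneg (norm_nonneg _) p)
    have h2 : (‖d x u‖ ^ p) ^ (1/p) ≤ lpNorm p (d x) :=
      Real.rpow_le_rpow (Real.rpow_nonneg (norm_nonneg _) p) h1 (by positivity)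
    rwa [← Real.rpow_mul (norm_nonneg _), mul_one_div_cancel hp0.ne',
      Real.rpow_one] at h2
  have hbound : ∀ n : ℕ, (n : ℝ) * ‖c‖ ≤ M := by
    intro n
    have h1 := hpt (MonoidAlgebra.single (t ^ n) (1:ℂ)) (g * t ^ n)
    rw [key n] at h1
    have h2 := hbdd (MonoidAlgebra.single (t ^ n) (1:ℂ))
    rw [supNorm_single, mul_one] at h2
    calc (n:ℝ) * ‖c‖ = ‖(n:ℂ) * c‖ := by
          rw [norm_mul, Complex.norm_natCast]
      _ ≤ M := le_trans h1 h2
  by_contra hc0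
  have habs : 0 < ‖c‖ := norm_pos_iff.mpr hc0
  obtain ⟨n, hn⟩ := exists_nat_gt (M / ‖c‖)
  have hM : M < (n:ℝ) * ‖c‖ := by rwa [div_lt_iff₀ habs] at hn
  exact absurd (hbound n) (not_le.mpr hM)
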